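/- The softmax map σ : ℝ^n → ℝ^n, defined by σ(x)_i = exp(x_i) / ∑_j exp(x_j), is 1/2-Lipschitz from the ℓ¹ norm to the ℓ¹ norm: for all x, y ∈ ℝ^n, ‖σ(x) − σ(y)‖₁ ≤ (1/2)‖x − y‖₁. -/

import Mathlib

open Finset

lemma softmax_key_ineq {n : ℕ} (p u : Fin n → ℝ) (hp : ∀ i, 0 ≤ p i)
    (hs : ∑ i, p i = 1) :
    ∑ i, p i * |u i - ∑ j, p j * u j| ≤ (1 / 2) * ∑ i, |u i| := by
  have step1 : ∀ i, p i * |u i - ∑ j, p j * u j|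
      ≤ ∑ j, (if i = j then 0 else p i * p j * (|u i| + |u j|)) := by
    intro i
    have hrw : u i - ∑ j, p j * u j = ∑ j, p j * (u i - u j) := by
      simp only [mul_sub, Finset.sum_sub_distrib, ← Finset.sum_mul, hs, one_mul]
    rw [hrw]
    calc p i * |∑ j, p j * (u i - u j)|
        ≤ p i * ∑ j, |p j * (u i - u j)| := by
          gcongr
          · exact hp i
          · exact Finset.abs_sum_le_sum_abs _ _
      _ = ∑ j, p i * (p j * |u i - u j|) := by
          rw [Finset.mul_sum]
          refine Finset.sum_congr rfl fun j _ => ?_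
          rw [abs_mul, abs_of_nonneg (hp j)]
      _ ≤ ∑ j, (if i = j then 0 else p i * p j * (|u i| + |u j|)) := by
          apply Finset.sum_le_sum
          intro j _
          by_cases h : i = j
          · simp [h]
          · simp only [h, if_false]
            rw [← mul_assoc]
            have habs : |u i - u j| ≤ |u i| + |u j| := abs_sub _ _
            have hpij : 0 ≤ p i * p j := mul_nonneg (hp i) (hp j)
            calc p i * p j * |u i - u j| ≤ p i * p j * (|u i| + |u j|) := by gcongr
              _ = p i * p j * (|u i| + |u j|) := rfl
  calc ∑ i, p i * |u i - ∑ j, p j * u j|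
      ≤ ∑ i, ∑ j, (if i = j then 0 else p i * p j * (|u i| + |u j|)) :=
        Finset.sum_le_sum fun i _ => step1 i
    _ = 2 * ∑ i, p i * (1 - p i) * |u i| := by
        have hC : ∀ i, (∑ j, (if i = j then 0 else p i * p j * (|u i| + |u j|)))
            = p i * |u i| + p i * (∑ j, p j * |u j|) - 2 * (p i * p i * |u i|) := by
          intro i
          have h1 : ∀ j, (if i = j then (0:ℝ) else p i * p j * (|u i| + |u j|))
              = p i * p j * (|u i| + |u j|)
                - (if i = j then p i * p j * (|u i| + |u j|) else 0) := by
            intro j; by_cases h : i = j <;> simp [h]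
          simp_rw [h1, Finset.sum_sub_distrib, Finset.sum_ite_eq, Finset.mem_univ, if_true]
          have h2 : ∀ j, p i * p j * (|u i| + |u j|)
              = p i * |u i| * p j + p i * (p j * |u j|) := fun j => by ring
          simp_rw [h2, Finset.sum_add_distrib, ← Finset.mul_sum, hs]
          ring
        simp_rw [hC]
        have key : ∑ i, (p i * |u i| + p i * (∑ j, p j * |u j|) - 2 * (p i * p i * |u i|))
            = ∑ i, (p i * |u i| - 2 * (p i * p i * |u i|))
              + (∑ i, p i) * (∑ j, p j * |u j|) := by
          rw [Finset.sum_mul, ← Finset.sum_add_distrib]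
          exact Finset.sum_congr rfl fun i _ => by ring
        rw [key, hs, one_mul, Finset.mul_sum, ← Finset.sum_add_distrib]
        exact Finset.sum_congr rfl fun i _ => by ring
    _ ≤ (1 / 2) * ∑ i, |u i| := by
        rw [Finset.mul_sum, Finset.mul_sum]
        apply Finset.sum_le_sum
        intro i _
        nlinarith [sq_nonneg (p i - 1/2), abs_nonneg (u i)]

/-- The softmax map is `1/2`-Lipschitz from the ℓ¹ norm to the
ℓ¹ norm. -/
theorem softmax_half_lipschitz_l1
    (n : ℕ) (x y : Fin n → ℝ) :
    ∑ i, |Real.exp (x i) / (∑ j, Real.exp (x j))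
          - Real.exp (y i) / (∑ j, Real.exp (y j))|
      ≤ (1 / 2) * ∑ i, |x i - y i| := by
  rcases Nat.eq_zero_or_pos n with hn | hn
  · subst hn; simp
  have hne : Nonempty (Fin n) := Fin.pos_iff_nonempty.mp hn
  set u : Fin n → ℝ := fun i => x i - y i with hu
  set E : Fin n → ℝ → ℝ := fun i t => Real.exp (y i + t * u i) with hE
  set S : ℝ → ℝ := fun t => ∑ j, E j t with hSdef
  have hSpos : ∀ t, 0 < S t := fun t =>
    Finset.sum_pos (fun j _ => Real.exp_pos _) Finset.univ_nonempty
  set f : Fin n → ℝ → ℝ := fun i t => E i t / S t with hf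
  set f' : Fin n → ℝ → ℝ := fun i t =>
    (u i * E i t * S t - E i t * ∑ j, u j * E j t) / (S t) ^ 2 with hf'
  have hE_deriv : ∀ i t, HasDerivAt (E i) (u i * E i t) t := by
    intro i t
    have h : HasDerivAt (fun s : ℝ => y i + s * u i) (u i) t := by
      simpa using ((hasDerivAt_id t).mul_const (u i)).const_add (y i)
    simpa [hE, mul_comm] using h.exp
  have hS_deriv : ∀ t, HasDerivAt S (∑ j, u j * E j t) t := fun t =>
    HasDerivAt.fun_sum fun j _ => hE_deriv j t
  have hf_deriv : ∀ i t, HasDerivAt (f i) (f' i t) t := fun i t =>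
    (hE_deriv i t).div (hS_deriv t) (hSpos t).ne'
  have hEc : ∀ i, Continuous (E i) := fun i =>
    (continuous_const.add (continuous_id.mul continuous_const)).rexp
  have hSc : Continuous S := continuous_finset_sum _ fun j _ => (hEc j).comp' continuous_id
  have hf'c : ∀ i, Continuous (f' i) := by
    intro i
    apply Continuous.div
    · exact ((continuous_const.mul (hEc i)).mul hSc).sub
        ((hEc i).mul (continuous_finset_sum _ fun j _ => continuous_const.mul (hEc j)))
    · exact hSc.pow 2
    · exact fun t => pow_ne_zero _ (hSpos t).ne'
  have hFTC : ∀ i, f i 1 - f i 0 = ∫ t in (0:ℝ)..1, f' i t := fun i =>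
    (intervalIntegral.integral_eq_sub_of_hasDerivAt (fun t _ => hf_deriv i t)
      ((hf'c i).intervalIntegrable 0 1)).symm
  have hrepr : ∀ i, Real.exp (x i) / (∑ j, Real.exp (x j))
      - Real.exp (y i) / (∑ j, Real.exp (y j)) = f i 1 - f i 0 := by
    intro i
    have h1 : ∀ j : Fin n, y j + 1 * u j = x j := fun j => by simp [hu]
    have h0 : ∀ j : Fin n, y j + 0 * u j = y j := fun j => by simp
    simp only [hf, hE, hSdef, h1, h0]
  have hpoint : ∀ t : ℝ, ∑ i, |f' i t| ≤ (1 / 2) * ∑ i, |u i| := by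
    intro t
    have hps : ∑ i, E i t / S t = 1 := by
      rw [← Finset.sum_div]; exact div_self (hSpos t).ne'
    have hkey := softmax_key_ineq (fun i => E i t / S t) u
      (fun i => div_nonneg (Real.exp_pos _).le (hSpos t).le) hps
    refine le_trans (le_of_eq ?_) hkey
    refine Finset.sum_congr rfl fun i _ => ?_
    have hc : ∑ j, (E j t / S t) * u j = (∑ j, u j * E j t) / S t := by
      rw [Finset.sum_div]; exact Finset.sum_congr rfl fun j _ => by ring
    have hval : f' i t = (E i t / S t) * (u i - ∑ j, (E j t / S t) * u j) := by
      rw [hc, hf']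
      field_simp [(hSpos t).ne']
    rw [hval, abs_mul, abs_of_nonneg (div_nonneg (Real.exp_pos _).le (hSpos t).le)]
  calc ∑ i, |Real.exp (x i) / (∑ j, Real.exp (x j))
          - Real.exp (y i) / (∑ j, Real.exp (y j))|
      = ∑ i, |∫ t in (0:ℝ)..1, f' i t| := by
        refine Finset.sum_congr rfl fun i _ => ?_
        rw [hrepr i, hFTC i]
    _ ≤ ∑ i, ∫ t in (0:ℝ)..1, |f' i t| :=
        Finset.sum_le_sum fun i _ =>
          intervalIntegral.abs_integral_le_integral_abs (by norm_num)
    _ = ∫ t in (0:ℝ)..1, ∑ i, |f' i t| :=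
        (intervalIntegral.integral_finset_sum fun i _ =>
          ((hf'c i).abs.intervalIntegrable 0 1)).symm
    _ ≤ ∫ t in (0:ℝ)..1, (1 / 2) * ∑ i, |u i| := by
        apply intervalIntegral.integral_mono_on (by norm_num)
        · exact (continuous_finset_sum _ fun i _ => (hf'c i).abs).intervalIntegrable 0 1
        · exact intervalIntegrable_const
        · exact fun t _ => hpoint t
    _ = (1 / 2) * ∑ i, |u i| := by simp
    _ = (1 / 2) * ∑ i, |x i - y i| := rfl
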